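/- The deformation U of the graded algebra A is a PBW-deformation (i.e., the canonical surjection Φ: A → gr U is an isomorphism of graded algebras) if and only if the associated central extension D is a regular central extension (i.e., the image of z in D is not a zero divisor). -/

import Mathlib

open Polynomial

noncomputable section

namespace PBWPaper

variable (K : Type*) [Field K] (s : ℕ)

/-- The free associative algebra `T = K⟨x_1,…,x_s⟩`. -/
abbrev T := FreeAlgebra K (Fin s)

/-- `V`: the span of the generators (the degree-one part of `T`). -/
def V : Submodule K (T K s) :=
  Submodule.span K (Set.range (FreeAlgebra.ι K : Fin s → T K s))

/-- `T_i`: the span of the words of length `i`. -/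
def Tgrade (i : ℕ) : Submodule K (T K s) := V K s ^ i

/-- `F^kT = ⊕_{i ≤ k} T_i`, the standard filtration of `T`. -/
def Ffilt (k : ℕ) : Submodule K (T K s) := ⨆ i ≤ k, Tgrade K s i

/-- An element of `T[z]` (with `deg z = 1`, total grading) is homogeneous of degree `n`
iff its `z^j`-coefficient lies in `T_{n-j}` for `j ≤ n` and vanishes for `j > n`. -/
def homogZ (n : ℕ) (w : Polynomial (T K s)) : Prop :=
  (∀ j ≤ n, w.coeff j ∈ Tgrade K s (n - j)) ∧ ∀ j, n < j → w.coeff j = 0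

/-- The nested subspaces `P_k` of `T`:  `P_1 = span(P ∩ F^1 T)` and
`P_k = V·P_{k-1} + P_{k-1}·V + span(P ∩ F^k T)` for `k > 1`. -/
def Pk (Pset : Set (T K s)) : ℕ → Submodule K (T K s)
  | 0 => ⊥
  | k + 1 => V K s * Pk Pset k + Pk Pset k * V K s +
      Submodule.span K (Pset ∩ (Ffilt K s (k + 1) : Set (T K s)))


variable {m : ℕ}

/-- The set of relations `P = {r_1+l_1, …, r_m+l_m}` of the deformation `U = T/⟨P⟩`. -/
def PsetOf (r l : Fin m → T K s) : Set (T K s) := Set.range fun i => r i + l i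

/-- The homogenization `h(r_i+l_i) = r_i + Σ_{j<d_i} z^{d_i-j} l_{i,j} ∈ T[z]`,
where `l_i = Σ_{j<d_i} l_{i,j}` is the decomposition of `l_i` into homogeneous components. -/
def hRel (d : Fin m → ℕ) (r : Fin m → T K s) (lc : Fin m → ℕ → T K s) (i : Fin m) :
    Polynomial (T K s) :=
  Polynomial.C (r i) + ∑ j ∈ Finset.range (d i), Polynomial.monomial (d i - j) (lc i j)

/-- The set of relations `h(P)` of the central extension `D = T[z]/⟨h(P)⟩`. -/
def hPset (d : Fin m → ℕ) (r : Fin m → T K s) (lc : Fin m → ℕ → T K s) :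
    Set (Polynomial (T K s)) := Set.range (hRel K s d r lc)

section Aux

variable {K} {s}

/-- Induction principle for two-sided ideal spans. -/
lemma span_ind {R : Type*} [Ring R] {G : Set R} {p : R → Prop}
    (h0 : p 0) (hadd : ∀ a b, p a → p b → p (a + b)) (hneg : ∀ a, p a → p (-a))
    (hgen : ∀ x g y, g ∈ G → p (x * g * y)) :
    ∀ a ∈ TwoSidedIdeal.span G, p a := by
  intro a ha
  rw [TwoSidedIdeal.mem_span_iff_mem_addSubgroup_closure] at ha
  induction ha using AddSubgroup.closure_induction with
  | mem x hx =>
    obtain ⟨-, ⟨x, -, g, hg, rfl⟩, y, -, rfl⟩ := hx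
    exact hgen x g y hg
  | zero => exact h0
  | add a b _ _ pa pb => exact hadd a b pa pb
  | neg a _ pa => exact hneg a pa

lemma prop_sum {α M : Type*} [AddCommMonoid M] {P : M → Prop}
    (h0 : P 0) (hadd : ∀ a b, P a → P b → P (a + b))
    (fs : Finset α) (f : α → M) (h : ∀ x ∈ fs, P (f x)) : P (∑ x ∈ fs, f x) :=
  Finset.sum_induction f P hadd h0 h

/-- The grading map: `ι x ↦ z · ι x`. -/
def Dmap : T K s →ₐ[K] Polynomial (T K s) :=
  FreeAlgebra.lift K fun x => (Polynomial.monomial 1 (FreeAlgebra.ι K x))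

@[simp] lemma Dmap_ι (x : Fin s) :
    Dmap (FreeAlgebra.ι K x) = Polynomial.monomial 1 (FreeAlgebra.ι K x) := by
  simp [Dmap]

/-- Projection onto the degree-`k` component of `T`. -/
def proj (k : ℕ) : T K s →ₗ[K] T K s where
  toFun u := (Dmap u).coeff k
  map_add' a b := by simp
  map_smul' c a := by simp [Polynomial.coeff_smul]

lemma proj_apply (k : ℕ) (u : T K s) : proj k u = (Dmap u).coeff k := rfl

lemma Dmap_of_mem {l : ℕ} {u : T K s} (hu : u ∈ Tgrade K s l) :
    Dmap u = Polynomial.monomial l u := by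
  induction l generalizing u with
  | zero =>
    rw [Tgrade, pow_zero, Submodule.mem_one] at hu
    obtain ⟨c, rfl⟩ := hu
    rw [Polynomial.monomial_zero_left]
    show Dmap (algebraMap K (T K s) c) = _
    rw [AlgHom.commutes, Polynomial.algebraMap_apply]
  | succ l ih =>
    rw [Tgrade, pow_succ] at hu
    refine Submodule.mul_induction_on hu (fun a ha b hb => ?_) (fun x y hx hy => ?_)
    · have hb1 : Dmap b = Polynomial.monomial 1 b := by
        induction hb using Submodule.span_induction with
        | mem v hv => obtain ⟨x, rfl⟩ := hv; simp
        | zero => simp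
        | add x y _ _ hx hy => rw [map_add, hx, hy, map_add]
        | smul c x _ hx => rw [map_smul, hx, Polynomial.smul_monomial]
      rw [map_mul, ih ha, hb1, Polynomial.monomial_mul_monomial]
    · rw [map_add, hx, hy, map_add]

lemma proj_mem (k : ℕ) (u : T K s) : proj k u ∈ Tgrade K s k := by
  induction u using FreeAlgebra.induction generalizing k with
  | grade0 c =>
    show (Dmap (algebraMap K (T K s) c)).coeff k ∈ _
    rw [AlgHom.commutes, Polynomial.algebraMap_apply, Polynomial.coeff_C]
    split
    · subst ‹k = 0›
      exact Submodule.mem_one.mpr ⟨c, rfl⟩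
    · exact Submodule.zero_mem _
  | grade1 x =>
    show (Dmap (FreeAlgebra.ι K x)).coeff k ∈ _
    rw [Dmap_ι, Polynomial.coeff_monomial]
    split
    · subst ‹1 = k›
      rw [Tgrade, pow_one]
      exact Submodule.subset_span ⟨x, rfl⟩
    · exact Submodule.zero_mem _
  | mul a b ha hb =>
    show (Dmap (a * b)).coeff k ∈ _
    rw [map_mul, Polynomial.coeff_mul]
    refine Submodule.sum_mem _ fun p hp => ?_
    have : Tgrade K s p.1 * Tgrade K s p.2 ≤ Tgrade K s k := by
      rw [Tgrade, Tgrade, Tgrade, ← pow_add, Finset.HasAntidiagonal.mem_antidiagonal.mp hp]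
    exact this (Submodule.mul_mem_mul (ha p.1) (hb p.2))
  | add a b ha hb =>
    show (Dmap (a + b)).coeff k ∈ _
    rw [map_add, Polynomial.coeff_add]
    exact Submodule.add_mem _ (ha k) (hb k)

lemma proj_of_mem {l k : ℕ} {u : T K s} (hu : u ∈ Tgrade K s l) :
    proj k u = if l = k then u else 0 := by
  rw [proj_apply, Dmap_of_mem hu, Polynomial.coeff_monomial]

lemma proj_of_mem_self {k : ℕ} {u : T K s} (hu : u ∈ Tgrade K s k) : proj k u = u := by
  rw [proj_of_mem hu, if_pos rfl]

lemma proj_of_mem_ne {l k : ℕ} {u : T K s} (h : l ≠ k) (hu : u ∈ Tgrade K s l) :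
    proj k u = 0 := by
  rw [proj_of_mem hu, if_neg h]

/-- Sum-of-coefficients ring hom (evaluation at the central element 1). -/
def eps : Polynomial (T K s) →+* T K s :=
  Polynomial.eval₂RingHom' (RingHom.id _) 1 (fun a => Commute.one_right a)

lemma eps_apply (w : Polynomial (T K s)) :
    eps w = Polynomial.eval₂ (RingHom.id _) 1 w := rfl

@[simp] lemma eps_monomial (n : ℕ) (a : T K s) : eps (Polynomial.monomial n a) = a := by
  rw [eps_apply, Polynomial.eval₂_monomial]; simp

@[simp] lemma eps_C (a : T K s) : eps (Polynomial.C a) = a := by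
  rw [eps_apply, Polynomial.eval₂_C]; rfl

@[simp] lemma eps_X : eps (Polynomial.X : Polynomial (T K s)) = 1 := by
  rw [eps_apply, Polynomial.eval₂_X]

/-- Constant-coefficient ring hom. -/
def ev0 : Polynomial (T K s) →+* T K s :=
  Polynomial.eval₂RingHom' (RingHom.id _) 0 (fun a => Commute.zero_right a)

lemma ev0_apply (w : Polynomial (T K s)) : ev0 w = w.coeff 0 := by
  show Polynomial.eval₂ (RingHom.id _) 0 w = _
  rw [Polynomial.eval₂_at_zero]; rfl

lemma eps_Dmap (u : T K s) : eps (Dmap u) = u := by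
  induction u using FreeAlgebra.induction with
  | grade0 c =>
    rw [AlgHom.commutes, Polynomial.algebraMap_apply]
    simp
  | grade1 x => simp
  | mul a b ha hb => rw [map_mul, map_mul, ha, hb]
  | add a b ha hb => rw [map_add, map_add, ha, hb]

lemma sum_proj_eq {u : T K s} {N : ℕ} (h : (Dmap u).natDegree < N) :
    ∑ k ∈ Finset.range N, proj k u = u := by
  have h1 : ∑ k ∈ Finset.range N, proj k u = (Dmap u).sum fun _ a => a := by
    rw [Polynomial.sum_over_range' (Dmap u) (fun _ => rfl) N h]
    rfl
  have h2 : eps (Dmap u) = (Dmap u).sum fun _ a => a := by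
    rw [eps_apply, Polynomial.eval₂_eq_sum]
    simp [Polynomial.sum]
  rw [h1, ← h2, eps_Dmap]

lemma exists_sum_proj_eq (u : T K s) : ∃ N, ∑ k ∈ Finset.range N, proj k u = u :=
  ⟨(Dmap u).natDegree + 1, sum_proj_eq (Nat.lt_succ_self _)⟩

lemma Tgrade_mul_mem {i j : ℕ} {u v : T K s} (hu : u ∈ Tgrade K s i)
    (hv : v ∈ Tgrade K s j) : u * v ∈ Tgrade K s (i + j) := by
  rw [Tgrade, pow_add]
  exact Submodule.mul_mem_mul hu hv

lemma Tgrade_le_Ffilt {i k : ℕ} (h : i ≤ k) : Tgrade K s i ≤ Ffilt K s k :=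
  le_iSup₂_of_le i h le_rfl

lemma proj_eq_zero_of_Ffilt {k n : ℕ} {u : T K s} (hu : u ∈ Ffilt K s k) (h : k < n) :
    proj n u = 0 := by
  have : Ffilt K s k ≤ LinearMap.ker (proj (K := K) (s := s) n) := by
    refine iSup₂_le fun i hi => fun v hv => ?_
    exact LinearMap.mem_ker.mpr (proj_of_mem_ne (by omega) hv)
  exact LinearMap.mem_ker.mp (this hu)

lemma homogZ_zero (n : ℕ) : homogZ K s n 0 := by
  constructor <;> intros <;> simp [Submodule.zero_mem]

lemma homogZ_add {n : ℕ} {u v : Polynomial (T K s)} (hu : homogZ K s n u)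
    (hv : homogZ K s n v) : homogZ K s n (u + v) := by
  refine ⟨fun j hj => ?_, fun j hj => ?_⟩
  · rw [Polynomial.coeff_add]
    exact Submodule.add_mem _ (hu.1 j hj) (hv.1 j hj)
  · rw [Polynomial.coeff_add, hu.2 j hj, hv.2 j hj, add_zero]

lemma homogZ_neg {n : ℕ} {u : Polynomial (T K s)} (hu : homogZ K s n u) :
    homogZ K s n (-u) := by
  refine ⟨fun j hj => ?_, fun j hj => ?_⟩
  · rw [Polynomial.coeff_neg]
    exact Submodule.neg_mem _ (hu.1 j hj)
  · rw [Polynomial.coeff_neg, hu.2 j hj, neg_zero]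

lemma homogZ_sub {n : ℕ} {u v : Polynomial (T K s)} (hu : homogZ K s n u)
    (hv : homogZ K s n v) : homogZ K s n (u - v) := by
  rw [sub_eq_add_neg]; exact homogZ_add hu (homogZ_neg hv)

lemma homogZ_mul {p q : ℕ} {u v : Polynomial (T K s)} (hu : homogZ K s p u)
    (hv : homogZ K s q v) : homogZ K s (p + q) (u * v) := by
  refine ⟨fun k hk => ?_, fun k hk => ?_⟩
  · rw [Polynomial.coeff_mul]
    refine Submodule.sum_mem _ fun ij hij => ?_
    have hij' : ij.1 + ij.2 = k := Finset.HasAntidiagonal.mem_antidiagonal.mp hij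
    by_cases h1 : ij.1 ≤ p
    · by_cases h2 : ij.2 ≤ q
      · have : p - ij.1 + (q - ij.2) = p + q - k := by omega
        rw [← this]
        exact Tgrade_mul_mem (hu.1 _ h1) (hv.1 _ h2)
      · rw [hv.2 _ (by omega), mul_zero]
        exact Submodule.zero_mem _
    · rw [hu.2 _ (by omega), zero_mul]
      exact Submodule.zero_mem _
  · rw [Polynomial.coeff_mul]
    refine Finset.sum_eq_zero fun ij hij => ?_
    have hij' : ij.1 + ij.2 = k := Finset.HasAntidiagonal.mem_antidiagonal.mp hij
    by_cases h1 : ij.1 ≤ p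
    · rw [hv.2 _ (by omega), mul_zero]
    · rw [hu.2 _ (by omega), zero_mul]

lemma homogZ_C {n : ℕ} {u : T K s} (hu : u ∈ Tgrade K s n) :
    homogZ K s n (Polynomial.C u) := by
  refine ⟨fun j hj => ?_, fun j hj => ?_⟩
  · rw [Polynomial.coeff_C]
    split
    · subst ‹j = 0›; simpa using hu
    · exact Submodule.zero_mem _
  · rw [Polynomial.coeff_C, if_neg (by omega)]

lemma homogZ_X_mul {n : ℕ} {u : Polynomial (T K s)} (hu : homogZ K s n u) :
    homogZ K s (n + 1) (Polynomial.X * u) := by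
  refine ⟨fun j hj => ?_, fun j hj => ?_⟩
  · match j with
    | 0 => rw [Polynomial.coeff_X_mul_zero]; exact Submodule.zero_mem _
    | t + 1 =>
      rw [Polynomial.coeff_X_mul]
      have : n + 1 - (t + 1) = n - t := by omega
      rw [this]
      exact hu.1 t (by omega)
  · match j with
    | 0 => rw [Polynomial.coeff_X_mul_zero]
    | t + 1 =>
      rw [Polynomial.coeff_X_mul]
      exact hu.2 t (by omega)

lemma homogZ_X_pow_mul {n : ℕ} (k : ℕ) {u : Polynomial (T K s)} (hu : homogZ K s n u) :
    homogZ K s (n + k) (Polynomial.X ^ k * u) := by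
  induction k with
  | zero => simpa using hu
  | succ k ih =>
    have : (Polynomial.X : Polynomial (T K s)) ^ (k + 1) * u =
        Polynomial.X * (Polynomial.X ^ k * u) := by
      rw [pow_succ', mul_assoc]
    rw [this, ← Nat.add_assoc]
    exact homogZ_X_mul ih

/-- The total-degree-`n` component of an element of `T[z]`. -/
def comp (n : ℕ) : Polynomial (T K s) →ₗ[K] Polynomial (T K s) where
  toFun w := ∑ j ∈ Finset.range (n + 1), Polynomial.monomial j (proj (n - j) (w.coeff j))
  map_add' a b := by
    simp only [Polynomial.coeff_add, map_add, ← Finset.sum_add_distrib]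
  map_smul' c a := by
    show (∑ j ∈ Finset.range (n + 1), Polynomial.monomial j (proj (n - j) ((c • a).coeff j)))
      = c • ∑ j ∈ Finset.range (n + 1), Polynomial.monomial j (proj (n - j) (a.coeff j))
    rw [Finset.smul_sum]
    refine Finset.sum_congr rfl fun j _ => ?_
    rw [Polynomial.coeff_smul, map_smul, Polynomial.smul_monomial]

lemma comp_apply (n : ℕ) (w : Polynomial (T K s)) :
    comp n w = ∑ j ∈ Finset.range (n + 1), Polynomial.monomial j (proj (n - j) (w.coeff j)) :=
  rfl

lemma coeff_comp (n t : ℕ) (w : Polynomial (T K s)) :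
    (comp n w).coeff t = if t ≤ n then proj (n - t) (w.coeff t) else 0 := by
  rw [comp_apply, Polynomial.finset_sum_coeff]
  simp only [Polynomial.coeff_monomial]
  rw [Finset.sum_ite_eq' (Finset.range (n + 1)) t fun j => proj (n - j) (w.coeff j)]
  simp [Nat.lt_succ_iff]

lemma homogZ_comp (n : ℕ) (w : Polynomial (T K s)) : homogZ K s n (comp n w) := by
  refine ⟨fun j hj => ?_, fun j hj => ?_⟩
  · rw [coeff_comp, if_pos hj]
    exact proj_mem _ _
  · rw [coeff_comp, if_neg (by omega)]

lemma comp_of_homog {l n : ℕ} {w : Polynomial (T K s)} (hw : homogZ K s l w) :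
    comp n w = if l = n then w else 0 := by
  by_cases hln : l = n
  · subst hln
    rw [if_pos rfl]
    ext t
    rw [coeff_comp]
    by_cases ht : t ≤ l
    · rw [if_pos ht]
      exact proj_of_mem_self (hw.1 t ht)
    · rw [if_neg ht, hw.2 t (by omega)]
  · rw [if_neg hln]
    ext t
    rw [coeff_comp, Polynomial.coeff_zero]
    by_cases ht : t ≤ n
    · rw [if_pos ht]
      by_cases htl : t ≤ l
      · exact proj_of_mem_ne (by omega) (hw.1 t htl)
      · rw [hw.2 t (by omega), map_zero]
    · rw [if_neg ht]

lemma sum_comp_aux (w : Polynomial (T K s)) (N : ℕ) :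
    ∑ n ∈ Finset.range N, comp n w =
      ∑ j ∈ Finset.range N,
        Polynomial.monomial j (∑ k ∈ Finset.range (N - j), proj k (w.coeff j)) := by
  induction N with
  | zero => simp
  | succ N ih =>
    rw [Finset.sum_range_succ, ih, comp_apply]
    have hsplit : ∀ j ∈ Finset.range N,
        Polynomial.monomial j (∑ k ∈ Finset.range (N + 1 - j), proj k (w.coeff j)) =
          Polynomial.monomial j (∑ k ∈ Finset.range (N - j), proj k (w.coeff j)) +
            Polynomial.monomial j (proj (N - j) (w.coeff j)) := by
      intro j hj
      have : N + 1 - j = (N - j) + 1 := by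
        have := Finset.mem_range.mp hj; omega
      rw [this, Finset.sum_range_succ, map_add]
    rw [Finset.sum_range_succ (fun j => Polynomial.monomial j
        (∑ k ∈ Finset.range (N + 1 - j), proj k (w.coeff j)))]
    rw [Finset.sum_congr rfl hsplit, Finset.sum_add_distrib]
    have : N + 1 - N = 1 := by omega
    rw [this]
    rw [Finset.sum_range_succ (fun j => Polynomial.monomial j (proj (N - j) (w.coeff j)))]
    have h0 : ∑ k ∈ Finset.range 1, proj k (w.coeff N) = proj (N - N) (w.coeff N) := by
      simp
    rw [h0]
    abel

lemma exists_sum_comp_eq (w : Polynomial (T K s)) :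
    ∃ N, ∑ n ∈ Finset.range N, comp n w = w := by
  set B := (Finset.range (w.natDegree + 1)).sup fun j => (Dmap (w.coeff j)).natDegree with hB
  refine ⟨w.natDegree + 1 + (B + 1), ?_⟩
  rw [sum_comp_aux]
  set N := w.natDegree + 1 + (B + 1) with hN
  have key : ∀ j ∈ Finset.range N,
      Polynomial.monomial j (∑ k ∈ Finset.range (N - j), proj k (w.coeff j)) =
        Polynomial.monomial j (w.coeff j) := by
    intro j hj
    by_cases hjd : j ≤ w.natDegree
    · congr 1
      refine sum_proj_eq ?_
      have hle : (Dmap (w.coeff j)).natDegree ≤ B :=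
        Finset.le_sup (f := fun j => (Dmap (w.coeff j)).natDegree)
          (Finset.mem_range.mpr (by omega))
      omega
    · rw [Polynomial.coeff_eq_zero_of_natDegree_lt (by omega)]
      simp
  rw [Finset.sum_congr rfl key]
  exact (Polynomial.as_sum_range' w N (by omega)).symm

lemma homog_eq_C {w : Polynomial (T K s)} (hw : homogZ K s 0 w) :
    w = Polynomial.C (w.coeff 0) := by
  ext t
  match t with
  | 0 => simp
  | t + 1 => rw [hw.2 (t + 1) (by omega), Polynomial.coeff_C, if_neg (by omega)]

lemma natDegree_le_of_homog {n : ℕ} {w : Polynomial (T K s)} (hw : homogZ K s n w) :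
    w.natDegree ≤ n :=
  Polynomial.natDegree_le_iff_coeff_eq_zero.mpr fun _ h => hw.2 _ h

lemma eps_homog {n : ℕ} {w : Polynomial (T K s)} (hw : homogZ K s n w) :
    eps w = ∑ j ∈ Finset.range (n + 1), w.coeff j := by
  conv_lhs => rw [Polynomial.as_sum_range' w (n + 1) (by
    have := natDegree_le_of_homog hw; omega)]
  rw [map_sum]
  exact Finset.sum_congr rfl fun j _ => eps_monomial _ _

lemma proj_eps_homog {n m : ℕ} {w : Polynomial (T K s)} (hw : homogZ K s n w) :
    proj m (eps w) = if m ≤ n then w.coeff (n - m) else 0 := by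
  rw [eps_homog hw, map_sum]
  have key : ∀ j ∈ Finset.range (n + 1),
      proj m (w.coeff j) = if j = (if m ≤ n then n - m else n + 1) then w.coeff j else 0 := by
    intro j hj
    have hj' : j ≤ n := by have := Finset.mem_range.mp hj; omega
    rw [proj_of_mem (hw.1 j hj')]
    by_cases hm : m ≤ n
    · rw [if_pos hm]
      by_cases h : j = n - m
      · rw [if_pos h, if_pos (by omega)]
      · rw [if_neg h, if_neg (by omega)]
    · rw [if_neg hm, if_neg (by omega), if_neg (by omega)]
  by_cases hm : m ≤ n
  · rw [if_pos hm] at key ⊢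
    rw [Finset.sum_congr rfl key, Finset.sum_ite_eq' (Finset.range (n + 1))]
    rw [if_pos (Finset.mem_range.mpr (by omega))]
  · rw [if_neg hm] at key ⊢
    rw [Finset.sum_congr rfl key, Finset.sum_ite_eq' (Finset.range (n + 1))]
    rw [if_neg (by simp)]

end Aux

section Main

variable {K : Type*} [Field K] {s : ℕ} {m : ℕ} {d : Fin m → ℕ} {r l : Fin m → T K s}
  {lc : Fin m → ℕ → T K s}

lemma hRel_coeff_zero (i : Fin m) : (hRel K s d r lc i).coeff 0 = r i := by
  rw [hRel, Polynomial.coeff_add, Polynomial.coeff_C, if_pos rfl,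
    Polynomial.finset_sum_coeff]
  have h : ∀ j ∈ Finset.range (d i), (Polynomial.monomial (d i - j) (lc i j)).coeff 0 = 0 := by
    intro j hj
    rw [Polynomial.coeff_monomial, if_neg (by have := Finset.mem_range.mp hj; omega)]
  rw [Finset.sum_congr rfl h, Finset.sum_const_zero, add_zero]

lemma homogZ_hRel (hr : ∀ i, r i ∈ Tgrade K s (d i)) (hlc : ∀ i j, lc i j ∈ Tgrade K s j)
    (i : Fin m) : homogZ K s (d i) (hRel K s d r lc i) := by
  constructor
  · intro k hk
    match k with
    | 0 => rw [hRel_coeff_zero, Nat.sub_zero]; exact hr i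
    | t + 1 =>
      rw [hRel, Polynomial.coeff_add, Polynomial.coeff_C, if_neg (by omega), zero_add,
        Polynomial.finset_sum_coeff]
      simp only [Polynomial.coeff_monomial]
      have h : ∀ j ∈ Finset.range (d i),
          (if d i - j = t + 1 then lc i j else 0) =
            (if j = d i - (t + 1) then lc i j else 0) := by
        intro j hj
        have := Finset.mem_range.mp hj
        by_cases hcase : d i - j = t + 1
        · rw [if_pos hcase, if_pos (by omega)]
        · rw [if_neg hcase, if_neg (by omega)]
      rw [Finset.sum_congr rfl h, Finset.sum_ite_eq' (Finset.range (d i)),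
        if_pos (Finset.mem_range.mpr (by omega))]
      exact hlc i _
  · intro k hk
    rw [hRel, Polynomial.coeff_add, Polynomial.coeff_C, if_neg (by omega), zero_add,
      Polynomial.finset_sum_coeff]
    refine Finset.sum_eq_zero fun j hj => ?_
    rw [Polynomial.coeff_monomial, if_neg (by have := Finset.mem_range.mp hj; omega)]

lemma eps_hRel (hl : ∀ i, l i = ∑ j ∈ Finset.range (d i), lc i j) (i : Fin m) :
    eps (hRel K s d r lc i) = r i + l i := by
  rw [hRel, map_add, eps_C, map_sum, hl i]
  congr 1
  exact Finset.sum_congr rfl fun j _ => eps_monomial _ _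

lemma eps_mem_JP (hl : ∀ i, l i = ∑ j ∈ Finset.range (d i), lc i j)
    {w : Polynomial (T K s)} (hw : w ∈ TwoSidedIdeal.span (hPset K s d r lc)) :
    eps w ∈ TwoSidedIdeal.span (PsetOf K s r l) := by
  have := TwoSidedIdeal.mem_span_iff.mp hw
    (TwoSidedIdeal.comap (eps (K := K) (s := s)) (TwoSidedIdeal.span (PsetOf K s r l))) ?_
  · rwa [TwoSidedIdeal.mem_comap] at this
  · rintro g ⟨i, rfl⟩
    rw [SetLike.mem_coe, TwoSidedIdeal.mem_comap, eps_hRel hl]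
    exact TwoSidedIdeal.subset_span ⟨i, rfl⟩

lemma coeff_zero_mem_JR {w : Polynomial (T K s)}
    (hw : w ∈ TwoSidedIdeal.span (hPset K s d r lc)) :
    w.coeff 0 ∈ TwoSidedIdeal.span (Set.range r) := by
  have := TwoSidedIdeal.mem_span_iff.mp hw
    (TwoSidedIdeal.comap (ev0 (K := K) (s := s)) (TwoSidedIdeal.span (Set.range r))) ?_
  · rw [TwoSidedIdeal.mem_comap, ev0_apply] at this
    exact this
  · rintro g ⟨i, rfl⟩
    rw [SetLike.mem_coe, TwoSidedIdeal.mem_comap, ev0_apply, hRel_coeff_zero]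
    exact TwoSidedIdeal.subset_span ⟨i, rfl⟩

lemma exists_homog_lift (hr : ∀ i, r i ∈ Tgrade K s (d i)) (hlc : ∀ i j, lc i j ∈ Tgrade K s j)
    (hl : ∀ i, l i = ∑ j ∈ Finset.range (d i), lc i j)
    {t : T K s} (ht : t ∈ TwoSidedIdeal.span (PsetOf K s r l)) :
    ∃ n w, w ∈ TwoSidedIdeal.span (hPset K s d r lc) ∧ homogZ K s n w ∧ eps w = t := by
  set I := TwoSidedIdeal.span (hPset K s d r lc) with hI
  set P : T K s → Prop :=
    fun t => ∃ n w, w ∈ I ∧ homogZ K s n w ∧ eps w = t with hP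
  have p0 : P 0 := ⟨0, 0, I.zero_mem, homogZ_zero 0, map_zero _⟩
  have padd : ∀ a b, P a → P b → P (a + b) := by
    rintro a b ⟨n₁, w₁, hw₁, hg₁, he₁⟩ ⟨n₂, w₂, hw₂, hg₂, he₂⟩
    refine ⟨max n₁ n₂,
      Polynomial.X ^ (max n₁ n₂ - n₁) * w₁ + Polynomial.X ^ (max n₁ n₂ - n₂) * w₂,
      I.add_mem (I.mul_mem_left _ _ hw₁) (I.mul_mem_left _ _ hw₂), ?_, ?_⟩
    · have g1 := homogZ_X_pow_mul (max n₁ n₂ - n₁) hg₁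
      have g2 := homogZ_X_pow_mul (max n₁ n₂ - n₂) hg₂
      rw [show n₁ + (max n₁ n₂ - n₁) = max n₁ n₂ by omega] at g1
      rw [show n₂ + (max n₁ n₂ - n₂) = max n₁ n₂ by omega] at g2
      exact homogZ_add g1 g2
    · rw [map_add, map_mul, map_mul, map_pow, map_pow, eps_X]
      simp [he₁, he₂]
  have pneg : ∀ a, P a → P (-a) := by
    rintro a ⟨n, w, hw, hg, he⟩
    exact ⟨n, -w, I.neg_mem hw, homogZ_neg hg, by rw [map_neg, he]⟩
  refine span_ind p0 padd pneg ?_ t ht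
  rintro a g b ⟨i, rfl⟩
  obtain ⟨Na, hNa⟩ := exists_sum_proj_eq a
  obtain ⟨Nb, hNb⟩ := exists_sum_proj_eq b
  have expand : a * (r i + l i) * b =
      ∑ u ∈ Finset.range Na, ∑ v ∈ Finset.range Nb,
        proj u a * (r i + l i) * proj v b := by
    conv_lhs => rw [← hNa, ← hNb]
    rw [Finset.sum_mul, Finset.sum_mul]
    exact Finset.sum_congr rfl fun u _ => Finset.mul_sum _ _ _
  rw [expand]
  refine prop_sum p0 padd _ _ fun u _ => prop_sum p0 padd _ _ fun v _ => ?_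
  refine ⟨u + d i + v,
    Polynomial.C (proj u a) * hRel K s d r lc i * Polynomial.C (proj v b),
    I.mul_mem_right _ _ (I.mul_mem_left _ _ (TwoSidedIdeal.subset_span ⟨i, rfl⟩)), ?_, ?_⟩
  · exact homogZ_mul (homogZ_mul (homogZ_C (proj_mem u a)) (homogZ_hRel hr hlc i))
      (homogZ_C (proj_mem v b))
  · rw [map_mul, map_mul, eps_C, eps_C, eps_hRel hl]

lemma exists_homog_lift_R (hr : ∀ i, r i ∈ Tgrade K s (d i))
    (hlc : ∀ i j, lc i j ∈ Tgrade K s j)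
    {t : T K s} (ht : t ∈ TwoSidedIdeal.span (Set.range r)) :
    ∀ n, ∃ w, w ∈ TwoSidedIdeal.span (hPset K s d r lc) ∧ homogZ K s n w ∧
      w.coeff 0 = proj n t := by
  set I := TwoSidedIdeal.span (hPset K s d r lc) with hI
  set P : T K s → Prop :=
    fun t => ∀ n, ∃ w, w ∈ I ∧ homogZ K s n w ∧ w.coeff 0 = proj n t with hP
  have p0 : P 0 := fun n => ⟨0, I.zero_mem, homogZ_zero n, by
    rw [Polynomial.coeff_zero, map_zero]⟩
  have padd : ∀ a b, P a → P b → P (a + b) := by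
    intro a b pa pb n
    obtain ⟨w₁, hw₁, hg₁, he₁⟩ := pa n
    obtain ⟨w₂, hw₂, hg₂, he₂⟩ := pb n
    exact ⟨w₁ + w₂, I.add_mem hw₁ hw₂, homogZ_add hg₁ hg₂, by
      rw [Polynomial.coeff_add, he₁, he₂, map_add]⟩
  have pneg : ∀ a, P a → P (-a) := by
    intro a pa n
    obtain ⟨w, hw, hg, he⟩ := pa n
    exact ⟨-w, I.neg_mem hw, homogZ_neg hg, by rw [Polynomial.coeff_neg, he, map_neg]⟩
  refine span_ind p0 padd pneg ?_ t ht
  rintro a g b ⟨i, rfl⟩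
  obtain ⟨Na, hNa⟩ := exists_sum_proj_eq a
  obtain ⟨Nb, hNb⟩ := exists_sum_proj_eq b
  have expand : a * r i * b =
      ∑ u ∈ Finset.range Na, ∑ v ∈ Finset.range Nb, proj u a * r i * proj v b := by
    conv_lhs => rw [← hNa, ← hNb]
    rw [Finset.sum_mul, Finset.sum_mul]
    exact Finset.sum_congr rfl fun u _ => Finset.mul_sum _ _ _
  rw [expand]
  refine prop_sum p0 padd _ _ fun u _ => prop_sum p0 padd _ _ fun v _ => ?_
  intro n
  have hmem : proj u a * r i * proj v b ∈ Tgrade K s (u + d i + v) :=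
    Tgrade_mul_mem (Tgrade_mul_mem (proj_mem u a) (hr i)) (proj_mem v b)
  by_cases hn : u + d i + v = n
  · refine ⟨Polynomial.C (proj u a) * hRel K s d r lc i * Polynomial.C (proj v b),
      I.mul_mem_right _ _ (I.mul_mem_left _ _ (TwoSidedIdeal.subset_span ⟨i, rfl⟩)), ?_, ?_⟩
    · rw [← hn]
      exact homogZ_mul (homogZ_mul (homogZ_C (proj_mem u a)) (homogZ_hRel hr hlc i))
        (homogZ_C (proj_mem v b))
    · have hmem' : proj u a * r i * proj v b ∈ Tgrade K s n := by rw [← hn]; exact hmem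
      rw [Polynomial.mul_coeff_zero, Polynomial.mul_coeff_zero, Polynomial.coeff_C,
        if_pos rfl, Polynomial.coeff_C, if_pos rfl, hRel_coeff_zero,
        proj_of_mem_self hmem']
  · exact ⟨0, I.zero_mem, homogZ_zero n, by
      rw [Polynomial.coeff_zero, proj_of_mem_ne hn hmem]⟩

lemma proj_one_JR (hd : ∀ i, 2 ≤ d i) (hr : ∀ i, r i ∈ Tgrade K s (d i))
    {t : T K s} (ht : t ∈ TwoSidedIdeal.span (Set.range r)) : proj 1 t = 0 := by
  have p0 : proj (K := K) (s := s) 1 0 = 0 := map_zero _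
  have padd : ∀ a b : T K s, proj 1 a = 0 → proj 1 b = 0 → proj 1 (a + b) = 0 := by
    intro a b ha hb; rw [map_add, ha, hb, add_zero]
  refine span_ind (p := fun t : T K s => proj 1 t = 0) p0 padd
    (fun a ha => by show proj 1 (-a) = 0; rw [map_neg, show proj 1 a = 0 from ha, neg_zero])
    ?_ t ht
  rintro a g b ⟨i, rfl⟩
  obtain ⟨Na, hNa⟩ := exists_sum_proj_eq a
  obtain ⟨Nb, hNb⟩ := exists_sum_proj_eq b
  have expand : a * r i * b =
      ∑ u ∈ Finset.range Na, ∑ v ∈ Finset.range Nb, proj u a * r i * proj v b := by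
    conv_lhs => rw [← hNa, ← hNb]
    rw [Finset.sum_mul, Finset.sum_mul]
    exact Finset.sum_congr rfl fun u _ => Finset.mul_sum _ _ _
  rw [expand]
  refine prop_sum (P := fun t : T K s => proj 1 t = 0) p0 padd _ _ fun u _ =>
    prop_sum (P := fun t : T K s => proj 1 t = 0) p0 padd _ _ fun v _ => ?_
  exact proj_of_mem_ne (by have := hd i; omega)
    (Tgrade_mul_mem (Tgrade_mul_mem (proj_mem u a) (hr i)) (proj_mem v b))

lemma JP_scalar_eq_zero (hd : ∀ i, 2 ≤ d i) (hr : ∀ i, r i ∈ Tgrade K s (d i))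
    (hr0 : ∀ i, r i ≠ 0)
    (hPhi : ∀ i : ℕ, 1 ≤ i → ∀ x ∈ Tgrade K s i,
      (∃ y ∈ Ffilt K s (i - 1), x + y ∈ TwoSidedIdeal.span (PsetOf K s r l)) →
      x ∈ TwoSidedIdeal.span (Set.range r))
    {t : T K s} (htP : t ∈ TwoSidedIdeal.span (PsetOf K s r l))
    (ht0 : t ∈ Tgrade K s 0) : t = 0 := by
  rcases isEmpty_or_nonempty (Fin m) with hm | hm
  · -- no relations: the span is zero
    have : PsetOf K s r l = ∅ := Set.range_eq_empty _
    rw [this] at htP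
    have p0 : (0 : T K s) = 0 := rfl
    refine span_ind (p := fun t : T K s => t = 0) rfl
      (fun a b ha hb => by rw [ha, hb, add_zero])
      (fun a ha => by rw [ha, neg_zero]) (fun x g y hg => absurd hg (Set.notMem_empty g))
      t htP
  · obtain ⟨i₀⟩ := hm
    rcases isEmpty_or_nonempty (Fin s) with hs | hs
    · -- no generators but relations are nonzero in positive degree: contradiction
      exfalso
      have hV : V K s = ⊥ := by
        rw [V, Set.range_eq_empty, Submodule.span_empty]
      have hT : Tgrade K s (d i₀) = ⊥ := by
        obtain ⟨k, hk⟩ : ∃ k, d i₀ = k + 1 := ⟨d i₀ - 1, by have := hd i₀; omega⟩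
        rw [Tgrade, hk, pow_succ, hV, Submodule.mul_bot]
      exact hr0 i₀ (Submodule.mem_bot K |>.mp (hT ▸ hr i₀))
    · by_contra htne
      rw [Tgrade, pow_zero, Submodule.mem_one] at ht0
      obtain ⟨c, hc⟩ := ht0
      have hcne : c ≠ 0 := fun h => htne (by rw [← hc, h, map_zero])
      have h1 : (1 : T K s) ∈ TwoSidedIdeal.span (PsetOf K s r l) := by
        have := TwoSidedIdeal.mul_mem_left _ (algebraMap K (T K s) c⁻¹) t htP
        rwa [← hc, ← map_mul, inv_mul_cancel₀ hcne, map_one] at this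
      obtain ⟨x0⟩ := hs
      have hι : FreeAlgebra.ι K x0 ∈ TwoSidedIdeal.span (PsetOf K s r l) := by
        have := TwoSidedIdeal.mul_mem_left _ (FreeAlgebra.ι K x0) 1 h1
        rwa [mul_one] at this
      have hι1 : FreeAlgebra.ι K x0 ∈ Tgrade K s 1 := by
        rw [Tgrade, pow_one]
        exact Submodule.subset_span ⟨x0, rfl⟩
      have hιR := hPhi 1 le_rfl _ hι1 ⟨0, Submodule.zero_mem _, by rwa [add_zero]⟩
      have := proj_one_JR hd hr hιR
      rw [proj_of_mem_self hι1] at this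
      exact FreeAlgebra.ι_ne_zero x0 this

lemma comp_mem_of_mem (hr : ∀ i, r i ∈ Tgrade K s (d i)) (hlc : ∀ i j, lc i j ∈ Tgrade K s j)
    {w : Polynomial (T K s)} (hw : w ∈ TwoSidedIdeal.span (hPset K s d r lc)) (n : ℕ) :
    comp n w ∈ TwoSidedIdeal.span (hPset K s d r lc) := by
  set I := TwoSidedIdeal.span (hPset K s d r lc) with hI
  set P : Polynomial (T K s) → Prop := fun w => ∀ n, comp n w ∈ I with hP
  have p0 : P 0 := fun n => by rw [map_zero]; exact I.zero_mem
  have padd : ∀ a b, P a → P b → P (a + b) := fun a b ha hb n => by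
    rw [map_add]; exact I.add_mem (ha n) (hb n)
  have pneg : ∀ a, P a → P (-a) := fun a ha n => by
    rw [map_neg]; exact I.neg_mem (ha n)
  refine span_ind p0 padd pneg ?_ w hw n
  rintro a g b ⟨i, rfl⟩
  obtain ⟨Na, hNa⟩ := exists_sum_comp_eq a
  obtain ⟨Nb, hNb⟩ := exists_sum_comp_eq b
  have expand : a * hRel K s d r lc i * b =
      ∑ u ∈ Finset.range Na, ∑ v ∈ Finset.range Nb,
        comp u a * hRel K s d r lc i * comp v b := by
    conv_lhs => rw [← hNa, ← hNb]
    rw [Finset.sum_mul, Finset.sum_mul]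
    exact Finset.sum_congr rfl fun u _ => Finset.mul_sum _ _ _
  rw [expand]
  intro n
  rw [map_sum]
  refine I.finsetSum_mem _ _ fun u _ => ?_
  rw [map_sum]
  refine I.finsetSum_mem _ _ fun v _ => ?_
  have hhom : homogZ K s (u + d i + v) (comp u a * hRel K s d r lc i * comp v b) :=
    homogZ_mul (homogZ_mul (homogZ_comp u a) (homogZ_hRel hr hlc i)) (homogZ_comp v b)
  rw [comp_of_homog hhom]
  split
  · exact I.mul_mem_right _ _ (I.mul_mem_left _ _ (TwoSidedIdeal.subset_span ⟨i, rfl⟩))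
  · exact I.zero_mem

lemma comp_X_mul (n : ℕ) (w : Polynomial (T K s)) :
    comp (n + 1) (Polynomial.X * w) = Polynomial.X * comp n w := by
  ext t
  rw [coeff_comp]
  match t with
  | 0 =>
    rw [if_pos (by omega), Polynomial.coeff_X_mul_zero, Polynomial.coeff_X_mul_zero, map_zero]
  | t + 1 =>
    rw [Polynomial.coeff_X_mul, Polynomial.coeff_X_mul, coeff_comp]
    by_cases ht : t ≤ n
    · rw [if_pos (by omega), if_pos ht, Nat.succ_sub_succ]
    · rw [if_neg (by omega), if_neg ht]

end Main

theorem pbw_deformation_iff_regular_central_extension (K : Type*) [Field K] (s : ℕ)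
    {m : ℕ} (d : Fin m → ℕ) (r l : Fin m → T K s) (lc : Fin m → ℕ → T K s)
    -- each relation `r_i` of `A` is homogeneous of degree `d_i ≥ 2` and nonzero
    (hd : ∀ i, 2 ≤ d i)
    (hr : ∀ i, r i ∈ Tgrade K s (d i))
    (hr0 : ∀ i, r i ≠ 0)
    -- `l_i = Σ_{j < d_i} l_{i,j}` with `l_{i,j}` homogeneous of degree `j`, so `deg l_i < d_i`
    (hlc : ∀ i j, lc i j ∈ Tgrade K s j)
    (hl : ∀ i, l i = ∑ j ∈ Finset.range (d i), lc i j) :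
    -- `U` is a PBW-deformation of `A`: the canonical surjection `Φ : A → gr U` is an
    -- isomorphism, i.e. `Φ` is injective in every degree `i ≥ 1`: whenever `x ∈ T_i` is
    -- homogeneous and `x + y ∈ ⟨P⟩` for some `y ∈ F^{i-1}T`, then `x ∈ ⟨R⟩`
    (∀ i : ℕ, 1 ≤ i → ∀ x ∈ Tgrade K s i,
        (∃ y ∈ Ffilt K s (i - 1), x + y ∈ TwoSidedIdeal.span (PsetOf K s r l)) →
        x ∈ TwoSidedIdeal.span (Set.range r))
    ↔
    -- `D` is a regular central extension: the image of `z` in `D = T[z]/⟨h(P)⟩` is not a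
    -- zero divisor (`z` is central in `T[z]`)
    (∀ w : Polynomial (T K s),
        X * w ∈ TwoSidedIdeal.span (hPset K s d r lc) →
        w ∈ TwoSidedIdeal.span (hPset K s d r lc)) := by
  constructor
  · -- PBW implies regularity of z
    intro hPhi w hXw
    set I := TwoSidedIdeal.span (hPset K s d r lc) with hI
    have claimC : ∀ n w, homogZ K s n w → ∀ k, Polynomial.X ^ k * w ∈ I → w ∈ I := by
      intro n
      induction n using Nat.strong_induction_on with
      | _ n ih =>
        intro w hw k hXkw
        have hepsw : eps w ∈ TwoSidedIdeal.span (PsetOf K s r l) := by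
          have := eps_mem_JP hl hXkw
          rwa [map_mul, map_pow, eps_X, one_pow, one_mul] at this
        rcases Nat.eq_zero_or_pos n with hn | hn
        · subst hn
          have h0 : w.coeff 0 = 0 := by
            have hepsC : eps w = w.coeff 0 := by
              rw [eps_homog hw]; simp
            rw [hepsC] at hepsw
            exact JP_scalar_eq_zero hd hr hr0 hPhi hepsw (by simpa using hw.1 0 le_rfl)
          rw [homog_eq_C hw, h0, map_zero]
          exact I.zero_mem
        · have hx : w.coeff 0 ∈ Tgrade K s n := by simpa using hw.1 0 (by omega)
          have hepssum : eps w = (∑ j ∈ Finset.range n, w.coeff (j + 1)) + w.coeff 0 := by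
            rw [eps_homog hw, Finset.sum_range_succ']
          have hyF : (∑ j ∈ Finset.range n, w.coeff (j + 1)) ∈ Ffilt K s (n - 1) := by
            refine Submodule.sum_mem _ fun j hj => ?_
            have hj' := Finset.mem_range.mp hj
            exact Tgrade_le_Ffilt (by omega) (hw.1 (j + 1) (by omega))
          have hxR : w.coeff 0 ∈ TwoSidedIdeal.span (Set.range r) :=
            hPhi n hn _ hx ⟨_, hyF, by rwa [add_comm, ← hepssum]⟩
          obtain ⟨v, hvI, hvhom, hv0⟩ := exists_homog_lift_R hr hlc hxR n
          rw [proj_of_mem_self hx] at hv0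
          have hw' : homogZ K s n (w - v) := homogZ_sub hw hvhom
          have hw'0 : (w - v).coeff 0 = 0 := by
            rw [Polynomial.coeff_sub, hv0, sub_self]
          have hsplit : w - v = Polynomial.X * (w - v).divX := by
            have h := Polynomial.X_mul_divX_add (w - v)
            rw [hw'0, map_zero, add_zero] at h
            exact h.symm
          have hdiv : homogZ K s (n - 1) (w - v).divX := by
            constructor
            · intro j hj
              rw [Polynomial.coeff_divX, show n - 1 - j = n - (j + 1) by omega]
              exact hw'.1 (j + 1) (by omega)
            · intro j hj
              rw [Polynomial.coeff_divX]
              exact hw'.2 (j + 1) (by omega)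
          have hXk : Polynomial.X ^ (k + 1) * (w - v).divX ∈ I := by
            have heq : Polynomial.X ^ (k + 1) * (w - v).divX =
                Polynomial.X ^ k * w - Polynomial.X ^ k * v := by
              rw [pow_succ, mul_assoc, ← hsplit, mul_sub]
            rw [heq]
            exact I.sub_mem hXkw (I.mul_mem_left _ _ hvI)
          have hdI := ih (n - 1) (by omega) (w - v).divX hdiv (k + 1) hXk
          have hweq : w = Polynomial.X * (w - v).divX + v := by
            rw [← hsplit]
            abel
          rw [hweq]
          exact I.add_mem (I.mul_mem_left _ _ hdI) hvI
    obtain ⟨N, hN⟩ := exists_sum_comp_eq w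
    rw [← hN]
    refine I.finsetSum_mem _ _ fun n _ => ?_
    refine claimC n (comp n w) (homogZ_comp n w) 1 ?_
    rw [pow_one, ← comp_X_mul]
    exact comp_mem_of_mem hr hlc hXw (n + 1)
  · -- regularity of z implies PBW
    intro hz i hi x hx hex
    obtain ⟨y, hy, hxy⟩ := hex
    obtain ⟨n, w, hwI, hwhom, hweps⟩ := exists_homog_lift hr hlc hl hxy
    have hlow : ∀ j < n - i, w.coeff j = 0 := by
      intro j hj
      have h1 : proj (n - j) (eps w) = w.coeff j := by
        rw [proj_eps_homog hwhom, if_pos (by omega), show n - (n - j) = j by omega]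
      have h2 : proj (n - j) (x + y) = 0 := by
        rw [map_add, proj_of_mem_ne (by omega) hx,
          proj_eq_zero_of_Ffilt hy (by omega), add_zero]
      rw [← h1, hweps, h2]
    obtain ⟨w₂, hw₂⟩ := (Polynomial.X_pow_dvd_iff).mpr hlow
    have hw₂I : w₂ ∈ TwoSidedIdeal.span (hPset K s d r lc) := by
      have hgen : ∀ k (u : Polynomial (T K s)),
          Polynomial.X ^ k * u ∈ TwoSidedIdeal.span (hPset K s d r lc) →
          u ∈ TwoSidedIdeal.span (hPset K s d r lc) := by
        intro k
        induction k with
        | zero => intro u hu; rwa [pow_zero, one_mul] at hu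
        | succ k ihk =>
          intro u hu
          rw [pow_succ, mul_assoc] at hu
          exact hz u (ihk _ hu)
      exact hgen (n - i) w₂ (hw₂ ▸ hwI)
    by_cases hin : i ≤ n
    · have hxval : x = w₂.coeff 0 := by
        have h1 : proj i (eps w) = w.coeff (n - i) := by
          rw [proj_eps_homog hwhom, if_pos hin]
        have h2 : proj i (x + y) = x := by
          rw [map_add, proj_of_mem_self hx,
            proj_eq_zero_of_Ffilt hy (by omega), add_zero]
        have h3 : w.coeff (n - i) = w₂.coeff 0 := by
          rw [hw₂]
          have h4 := Polynomial.coeff_X_pow_mul w₂ (n - i) 0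
          simpa using h4
        rw [← h2, ← hweps, h1, h3]
      rw [hxval]
      exact coeff_zero_mem_JR hw₂I
    · have hx0 : x = 0 := by
        have h1 : proj i (eps w) = 0 := by
          rw [proj_eps_homog hwhom, if_neg (by omega)]
        have h2 : proj i (x + y) = x := by
          rw [map_add, proj_of_mem_self hx,
            proj_eq_zero_of_Ffilt hy (by omega), add_zero]
        rw [← h2, ← hweps, h1]
      rw [hx0]
      exact TwoSidedIdeal.zero_mem _

end PBWPaper
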